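/- Let k ≥ 1 and let D be a digraph with a maximal spanning out-tree T. If for some 0 ≤ i ≤ k−1 the digraph D_i^2 contains an oriented cycle with at least 6 blocks, then D contains a subdivision of C(k,1,1,1). -/

import Mathlib

universe u
variable {V : Type u}

/-- Directed walks of a given length along a relation. -/
inductive DWalk (T : V → V → Prop) : V → V → ℕ → Prop
  | refl (v : V) : DWalk T v v 0
  | cons {u v w : V} {n : ℕ} : T u v → DWalk T v w n → DWalk T u w (n + 1)

/-- `Anc T y x` : `y` is an ancestor of `x` in `T` (`y ≤_T x`). -/
def Anc (T : V → V → Prop) (y x : V) : Prop := Relation.ReflTransGen T y x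

/-- `T` is an out-tree of the digraph `D` with vertex set `S` and root `r`. -/
def IsOutTreeOn (D T : V → V → Prop) (S : Set V) (r : V) : Prop :=
  r ∈ S ∧ (∀ x y, T x y → D x y ∧ x ∈ S ∧ y ∈ S) ∧ (∀ v, ¬ T v r) ∧
  (∀ v ∈ S, v ≠ r → ∃! u, T u v) ∧ (∀ v ∈ S, Relation.ReflTransGen T r v)

/-- `T` is a spanning out-tree of `D` rooted at `r`. -/
def IsSpanningOutTree (D T : V → V → Prop) (r : V) : Prop :=
  IsOutTreeOn D T Set.univ r

/-- `lvl` is the level function of the out-tree `T` rooted at `r`. -/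
def IsLevelFun (T : V → V → Prop) (r : V) (lvl : V → ℕ) : Prop :=
  ∀ v, DWalk T r v (lvl v)

/-- `T` is a maximal spanning out-tree of `D`: for every backward arc `(x,y)`
(`l_T(x) ≥ l_T(y)`) there is a directed path from `y` to `x` in `T`. -/
def IsMaximalSOT (D T : V → V → Prop) (r : V) (lvl : V → ℕ) : Prop :=
  IsSpanningOutTree D T r ∧ IsLevelFun T r lvl ∧
    ∀ x y, D x y → lvl y ≤ lvl x → Anc T y x

/-- `l` is the vertex list of a directed path from `a` to `b` in `D`. -/
def IsDPath (D : V → V → Prop) (a b : V) (l : List V) : Prop :=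
  l.head? = some a ∧ l.getLast? = some b ∧ l.Chain' D ∧ l.Nodup

/-- Interior vertices of a path given by its vertex list. -/
def pint (l : List V) : List V := l.tail.dropLast

/-- `D` contains a subdivision of the four-blocks cycle `C(k,1,1,1)`:
four internally disjoint directed paths `x1→y1` (length ≥ k), `x2→y1`, `x2→y2`, `x1→y2`
(lengths ≥ 1). -/
def HasSubdivCk111 (D : V → V → Prop) (k : ℕ) : Prop :=
  ∃ (x1 x2 y1 y2 : V) (p1 p2 p3 p4 : List V),
    IsDPath D x1 y1 p1 ∧ IsDPath D x2 y1 p2 ∧ IsDPath D x2 y2 p3 ∧ IsDPath D x1 y2 p4 ∧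
    k + 1 ≤ p1.length ∧ 2 ≤ p2.length ∧ 2 ≤ p3.length ∧ 2 ≤ p4.length ∧
    x1 ≠ x2 ∧ x1 ≠ y1 ∧ x1 ≠ y2 ∧ x2 ≠ y1 ∧ x2 ≠ y2 ∧ y1 ≠ y2 ∧
    (∀ v, (v = x1 ∨ v = x2 ∨ v = y1 ∨ v = y2) →
      v ∉ pint p1 ∧ v ∉ pint p2 ∧ v ∉ pint p3 ∧ v ∉ pint p4) ∧
    (∀ v ∈ pint p1, v ∉ pint p2 ∧ v ∉ pint p3 ∧ v ∉ pint p4) ∧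
    (∀ v ∈ pint p2, v ∉ pint p3 ∧ v ∉ pint p4) ∧
    (∀ v ∈ pint p3, v ∉ pint p4)

/-- Disjointness conditions making `2*m` blocks (paths `P j : x j → y j` and
`Q j : x (j+1) → y j`) into an oriented cycle with `2*m` blocks. -/
def BlockDisjoint (m : ℕ) (x y : ℕ → V) (P Q : ℕ → List V) : Prop :=
  (∀ i < m, ∀ j < m, i ≠ j → x i ≠ x j) ∧
  (∀ i < m, ∀ j < m, i ≠ j → y i ≠ y j) ∧
  (∀ i < m, ∀ j < m, x i ≠ y j) ∧
  (∀ i < m, ∀ j < m, ∀ v, (v ∈ pint (P i) ∨ v ∈ pint (Q i)) → v ≠ x j ∧ v ≠ y j) ∧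
  (∀ i < m, ∀ j < m, i ≠ j → ∀ v, v ∈ pint (P i) → v ∉ pint (P j)) ∧
  (∀ i < m, ∀ j < m, i ≠ j → ∀ v, v ∈ pint (Q i) → v ∉ pint (Q j)) ∧
  (∀ i < m, ∀ j < m, ∀ v, v ∈ pint (P i) → v ∉ pint (Q j))

/-- The relation `R` contains an oriented cycle with exactly `2*m` blocks. -/
def HasBlockCycle (R : V → V → Prop) (m : ℕ) : Prop :=
  ∃ (x y : ℕ → V) (P Q : ℕ → List V),
    (∀ j < m, IsDPath R (x j) (y j) (P j) ∧ 2 ≤ (P j).length) ∧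
    (∀ j < m, IsDPath R (x ((j + 1) % m)) (y j) (Q j) ∧ 2 ≤ (Q j).length) ∧
    BlockDisjoint m x y P Q

/-- Arcs of `D_i^1` : arcs of `D` inside the residue class `i mod k` of levels
which are forward for the tree order. -/
def Di1 (D T : V → V → Prop) (lvl : V → ℕ) (k i : ℕ) : V → V → Prop :=
  fun a b => D a b ∧ lvl a % k = i ∧ lvl b % k = i ∧ Anc T a b

/-- Arcs of `D_i^2` : backward for the tree order. -/
def Di2 (D T : V → V → Prop) (lvl : V → ℕ) (k i : ℕ) : V → V → Prop :=
  fun a b => D a b ∧ lvl a % k = i ∧ lvl b % k = i ∧ Anc T b a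

/-- Arcs of `D_i^3` : between tree-incomparable vertices. -/
def Di3 (D T : V → V → Prop) (lvl : V → ℕ) (k i : ℕ) : V → V → Prop :=
  fun a b => D a b ∧ lvl a % k = i ∧ lvl b % k = i ∧ ¬ Anc T a b ∧ ¬ Anc T b a

/-- `D` contains a mixed cycle with respect to `T` (and the level function `lvl`). -/
def HasMixedCycle (D T : V → V → Prop) (lvl : V → ℕ) (k : ℕ) : Prop :=
  ∃ i < k, ∃ m, 2 ≤ m ∧ ∃ (x y : ℕ → V) (P Q : ℕ → List V) (z1 : V) (l1 l2 : List V),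
    IsDPath D (x 0) (y 0) (P 0) ∧
    P 0 = l1 ++ z1 :: l2 ∧ z1 ≠ y 0 ∧
    List.Chain' T (l1 ++ [z1]) ∧ List.Chain' (Di1 D T lvl k i) (z1 :: l2) ∧
    (∀ j, 1 ≤ j → j < m → IsDPath (Di1 D T lvl k i) (x j) (y j) (P j) ∧ 2 ≤ (P j).length) ∧
    (∀ j < m, IsDPath (Di1 D T lvl k i) (x ((j + 1) % m)) (y j) (Q j) ∧ 2 ≤ (Q j).length) ∧
    BlockDisjoint m x y P Q ∧
    (∀ j < m, Anc T (x j) (x 0) → Anc T (x 0) (x j))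

/-- `D` contains a back-mixed cycle with respect to `T`. -/
def HasBackMixedCycle (D T : V → V → Prop) (lvl : V → ℕ) (k : ℕ) : Prop :=
  ∃ i < k, ∃ m, 3 ≤ m ∧ ∃ (x y : ℕ → V) (P Q : ℕ → List V) (z1 : V) (l1 l2 : List V),
    (∀ j < m, IsDPath (Di2 D T lvl k i) (y j) (x j) (P j) ∧ 2 ≤ (P j).length) ∧
    (∀ j, j < m - 1 → IsDPath (Di2 D T lvl k i) (y j) (x ((j + 1) % m)) (Q j) ∧ 2 ≤ (Q j).length) ∧
    IsDPath D (y (m - 1)) (x 0) (Q (m - 1)) ∧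
    Q (m - 1) = l1 ++ z1 :: l2 ∧ z1 ≠ y (m - 1) ∧
    List.Chain' (Di2 D T lvl k i) (l1 ++ [z1]) ∧ List.Chain' T (z1 :: l2) ∧
    BlockDisjoint m y x P Q ∧
    (∀ j < m, ∀ v, (v ∈ P j ∨ v ∈ Q j) → Anc T v z1 → Anc T z1 v)

/-- `G` contains a wheel as a subgraph: a chordless cycle together with a vertex
adjacent to at least three vertices of the cycle. -/
def HasWheel (G : SimpleGraph V) : Prop :=
  ∃ (n : ℕ) (c : Fin (n + 3) → V) (v : V),
    Function.Injective c ∧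
    (∀ i, G.Adj (c i) (c (i + 1))) ∧
    (∀ i j, G.Adj (c i) (c j) → j = i + 1 ∨ i = j + 1) ∧
    (∀ i, v ≠ c i) ∧
    (∃ i1 i2 i3 : Fin (n + 3), i1 ≠ i2 ∧ i1 ≠ i3 ∧ i2 ≠ i3 ∧
      G.Adj v (c i1) ∧ G.Adj v (c i2) ∧ G.Adj v (c i3))


/- ### Auxiliary lemmas -/

section AuxTree
variable {T : V → V → Prop} {r : V} {lvl : V → ℕ}

lemma dwalk_eq_of_zero {a b : V} (h : DWalk T a b 0) : a = b := by
  cases h; rfl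

lemma dwalk_snoc {a b c : V} {n : ℕ} (h : DWalk T a b n) (hbc : T b c) :
    DWalk T a c (n + 1) := by
  induction h with
  | refl v => exact DWalk.cons hbc (DWalk.refl c)
  | cons h w ih => exact DWalk.cons h (ih hbc)

lemma dwalk_snoc_inv {a b : V} (n : ℕ) (h : DWalk T a b (n + 1)) :
    ∃ c, DWalk T a c n ∧ T c b := by
  induction n generalizing a with
  | zero =>
    cases h with
    | cons h1 w =>
      obtain rfl := dwalk_eq_of_zero w
      exact ⟨a, DWalk.refl a, h1⟩
  | succ m ih =>
    cases h with
    | cons h1 w =>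
      obtain ⟨c, w', hc⟩ := ih w
      exact ⟨c, DWalk.cons h1 w', hc⟩

lemma dwalk_to_root (hroot : ∀ v, ¬ T v r) {a : V} {n : ℕ} (h : DWalk T a r n) : n = 0 := by
  cases n with
  | zero => rfl
  | succ m =>
    obtain ⟨c, _, hc⟩ := dwalk_snoc_inv m h
    exact absurd hc (hroot c)

lemma dwalk_unique (hroot : ∀ v, ¬ T v r) (hpar : ∀ v, v ≠ r → ∃! u, T u v) :
    ∀ {n : ℕ} {v : V} {m : ℕ}, DWalk T r v n → DWalk T r v m → n = m := by
  intro n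
  induction n with
  | zero =>
    intro v m h1 h2
    obtain rfl := dwalk_eq_of_zero h1
    exact (dwalk_to_root hroot h2).symm
  | succ n ih =>
    intro v m h1 h2
    obtain ⟨c, hw, hc⟩ := dwalk_snoc_inv n h1
    have hvr : v ≠ r := fun h => hroot c (h ▸ hc)
    cases m with
    | zero => exact absurd (dwalk_eq_of_zero h2).symm hvr
    | succ m' =>
      obtain ⟨c', hw', hc'⟩ := dwalk_snoc_inv m' h2
      obtain ⟨u, _, huniq⟩ := hpar v hvr
      have hcc : c' = c := (huniq c' hc').trans (huniq c hc).symm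
      rw [hcc] at hw'
      rw [ih hw hw']
end AuxTree

section AuxLvl
variable {T : V → V → Prop} {r : V} {lvl : V → ℕ}

lemma anc_lvl_le (hstep : ∀ u v, T u v → lvl v = lvl u + 1) {u v : V} (h : Anc T u v) :
    lvl u ≤ lvl v := by
  induction h with
  | refl => exact le_refl _
  | tail h1 h2 ih => have := hstep _ _ h2; omega

lemma anc_lvl_lt (hstep : ∀ u v, T u v → lvl v = lvl u + 1) {u v : V} (h : Anc T u v)
    (hne : u ≠ v) : lvl u < lvl v := by
  rcases Relation.ReflTransGen.cases_tail h with h1 | ⟨c, h1, h2⟩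
  · exact absurd h1.symm hne
  · have := anc_lvl_le hstep h1
    have := hstep _ _ h2
    omega

lemma anc_antisymm (hstep : ∀ u v, T u v → lvl v = lvl u + 1) {u v : V}
    (h1 : Anc T u v) (h2 : Anc T v u) : u = v := by
  by_contra hne
  have := anc_lvl_lt hstep h1 hne
  have := anc_lvl_lt hstep h2 (Ne.symm hne)
  omega

lemma anc_total (hroot : ∀ v, ¬ T v r) (hpar : ∀ v, v ≠ r → ∃! u, T u v)
    (hstep : ∀ u v, T u v → lvl v = lvl u + 1) :
    ∀ {c a b : V}, Anc T a c → Anc T b c → Anc T a b ∨ Anc T b a := by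
  suffices H : ∀ n, ∀ c a b : V, lvl c ≤ n → Anc T a c → Anc T b c →
      Anc T a b ∨ Anc T b a by
    intro c a b ha hb; exact H (lvl c) c a b le_rfl ha hb
  intro n
  induction n with
  | zero =>
    intro c a b hn ha hb
    rcases Relation.ReflTransGen.cases_tail ha with h | ⟨d, had, hdc⟩
    · subst h; right; exact hb
    · have := hstep _ _ hdc; omega
  | succ n ih =>
    intro c a b hn ha hb
    rcases Relation.ReflTransGen.cases_tail ha with h | ⟨d, had, hdc⟩
    · subst h; right; exact hb
    rcases Relation.ReflTransGen.cases_tail hb with h | ⟨e, hbe, hec⟩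
    · subst h; left; exact ha
    have hcr : c ≠ r := fun h => hroot d (h ▸ hdc)
    obtain ⟨u, _, huniq⟩ := hpar c hcr
    have hde : e = d := (huniq e hec).trans (huniq d hdc).symm
    rw [hde] at hbe
    have hlvld : lvl d ≤ n := by have := hstep _ _ hdc; omega
    exact ih d a b hlvld had hbe

lemma anc_path (hstep : ∀ u v, T u v → lvl v = lvl u + 1) {u v : V} (h : Anc T u v) :
    ∃ l : List V, l.head? = some u ∧ l.getLast? = some v ∧ l.Chain' T ∧ l.Nodup ∧
      l.length + lvl u = lvl v + 1 ∧ ∀ w ∈ l, Anc T u w ∧ Anc T w v := by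
  induction h using Relation.ReflTransGen.head_induction_on with
  | refl =>
    exact ⟨[v], rfl, rfl, List.isChain_singleton v, List.nodup_singleton v, by simp [Nat.add_comm],
      by intro w hw; simp at hw; subst hw; exact ⟨Relation.ReflTransGen.refl, Relation.ReflTransGen.refl⟩⟩
  | head h' hrest ih =>
    rename_i a c
    obtain ⟨l, h1, h2, h3, h4, h5, h6⟩ := ih
    have hlne : l ≠ [] := by rintro rfl; simp at h1
    have hlc : lvl c = lvl a + 1 := hstep _ _ h'
    refine ⟨a :: l, rfl, ?_, ?_, ?_, ?_, ?_⟩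
    · rw [show a :: l = [a] ++ l from rfl, List.getLast?_append_of_ne_nil _ hlne]; exact h2
    · rw [List.Chain', List.isChain_cons]
      exact ⟨by intro y hy; rw [h1] at hy; obtain rfl := Option.mem_some_iff.mp hy; exact h', h3⟩
    · refine List.nodup_cons.mpr ⟨?_, h4⟩
      intro hmem
      have := anc_lvl_le hstep (h6 a hmem).1
      omega
    · simp only [List.length_cons]; omega
    · intro w hw
      rcases List.mem_cons.mp hw with rfl | hw'
      · exact ⟨Relation.ReflTransGen.refl, Relation.ReflTransGen.head h' hrest⟩
      · exact ⟨Relation.ReflTransGen.head h' (h6 w hw').1, (h6 w hw').2⟩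
end AuxLvl

section AuxList
variable {R : V → V → Prop}

lemma chain'_rtg_head : ∀ (l : List V) {a w : V}, l.Chain' R → l.head? = some a → w ∈ l →
    Relation.ReflTransGen R a w := by
  intro l
  induction l with
  | nil => intro a w _ _ hw; simp at hw
  | cons x t ih =>
    intro a w hc ha hw
    obtain rfl : x = a := by simpa using ha
    rcases List.mem_cons.mp hw with rfl | hw'
    · exact Relation.ReflTransGen.refl
    · cases t with
      | nil => simp at hw'
      | cons y t' =>
        have h1 := List.isChain_cons_cons.mp hc
        exact Relation.ReflTransGen.head h1.1 (ih h1.2 rfl hw')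

lemma chain'_rtg_last : ∀ (l : List V) {b w : V}, l.Chain' R → l.getLast? = some b → w ∈ l →
    Relation.ReflTransGen R w b := by
  intro l
  induction l with
  | nil => intro b w _ _ hw; simp at hw
  | cons x t ih =>
    intro b w hc hb hw
    cases t with
    | nil =>
      obtain rfl : x = b := by simpa using hb
      obtain rfl : w = x := by simpa using hw
      exact Relation.ReflTransGen.refl
    | cons y t' =>
      have hb' : (y :: t').getLast? = some b := by rwa [List.getLast?_cons_cons] at hb
      have h1 := List.isChain_cons_cons.mp hc
      rcases List.mem_cons.mp hw with rfl | hw'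
      · exact Relation.ReflTransGen.head h1.1 (ih h1.2 hb' List.mem_cons_self)
      · exact ih h1.2 hb' hw'

lemma rtg_anc_rev {T : V → V → Prop} {S : V → V → Prop} (hS : ∀ a b, S a b → Anc T b a)
    {a b : V} (h : Relation.ReflTransGen S a b) : Anc T b a := by
  induction h with
  | refl => exact Relation.ReflTransGen.refl
  | tail h1 h2 ih => exact Relation.ReflTransGen.trans (hS _ _ h2) ih

lemma exists_split (Qp : V → Prop) : ∀ (l : List V), l ≠ [] → (∀ b ∈ l.getLast?, Qp b) →
    ∃ l1 v l2, l = l1 ++ v :: l2 ∧ Qp v ∧ ∀ u ∈ l1, ¬ Qp u := by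
  intro l
  induction l with
  | nil => intro h; exact absurd rfl h
  | cons a t ih =>
    intro _ hlast
    by_cases ha : Qp a
    · exact ⟨[], a, t, rfl, ha, by simp⟩
    · cases t with
      | nil => exact absurd (hlast a (by simp)) ha
      | cons b t' =>
        obtain ⟨l1, v, l2, heq, hv, hl1⟩ := ih (by simp)
          (by intro c hc; apply hlast; rwa [List.getLast?_cons_cons])
        refine ⟨a :: l1, v, l2, by rw [List.cons_append, heq], hv, ?_⟩
        intro u hu
        rcases List.mem_cons.mp hu with rfl | hu'
        · exact ha
        · exact hl1 u hu'

lemma mem_of_getLast?' {l : List V} {b : V} (h : l.getLast? = some b) : b ∈ l := by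
  obtain ⟨h', rfl⟩ := List.mem_getLast?_eq_getLast h
  exact List.getLast_mem h'

lemma getLast_not_mem_dropLast {l : List V} (hn : l.Nodup) {b : V} (hb : l.getLast? = some b) :
    b ∉ l.dropLast := by
  intro hmem
  have hne : l ≠ [] := by rintro rfl; simp at hb
  have heq := List.dropLast_append_getLast hne
  have hbl : l.getLast hne = b := by
    rw [List.getLast?_eq_getLast_of_ne_nil hne] at hb
    exact Option.some_inj.mp hb
  rw [← heq, List.nodup_append] at hn
  exact hn.2.2 b hmem _ (by simp [hbl]) rfl

lemma mem_trichotomy : ∀ (l : List V) {a b w : V}, l.head? = some a → l.getLast? = some b →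
    w ∈ l → w = a ∨ w = b ∨ w ∈ l.tail.dropLast := by
  intro l a b w ha hb hw
  cases l with
  | nil => simp at hw
  | cons x t =>
    obtain rfl : x = a := by simpa using ha
    rcases List.mem_cons.mp hw with rfl | hw'
    · exact Or.inl rfl
    · cases ht : t with
      | nil => subst ht; simp at hw'
      | cons y t' =>
        subst ht
        have htne : (y : V) :: t' ≠ [] := by simp
        have hb' : (y :: t').getLast htne = b := by
          rw [List.getLast?_cons_cons, List.getLast?_eq_getLast_of_ne_nil htne] at hb
          exact Option.some_inj.mp hb
        have : w ∈ (y :: t').dropLast ++ [(y :: t').getLast htne] := by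
          rw [List.dropLast_append_getLast]; exact hw'
        rcases List.mem_append.mp this with h | h
        · exact Or.inr (Or.inr (by simpa using h))
        · simp only [List.mem_singleton] at h
          exact Or.inr (Or.inl (h.trans hb'))

lemma mod_k_le {k a b : ℕ} (hk : 1 ≤ k) (hab : a < b) (hm : a % k = b % k) : a + k ≤ b := by
  have h1 : k ∣ b - a := (Nat.modEq_iff_dvd' (le_of_lt hab)).mp hm
  have h2 : k ≤ b - a := Nat.le_of_dvd (by omega) h1
  omega
end AuxList


section AuxPath
variable {D T : V → V → Prop} {r : V} {lvl : V → ℕ} {k i : ℕ}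

lemma isdpath_mono {D1 D2 : V → V → Prop} (h : ∀ a b, D1 a b → D2 a b) {a b : V} {l : List V}
    (hp : IsDPath D1 a b l) : IsDPath D2 a b l :=
  ⟨hp.1, hp.2.1, hp.2.2.1.imp (fun x y => h x y), hp.2.2.2⟩

lemma di2path_anc {x y : V} {P : List V} (hP : IsDPath (Di2 D T lvl k i) x y P) :
    ∀ w ∈ P, Anc T y w ∧ Anc T w x := by
  intro w hw
  constructor
  · exact rtg_anc_rev (T := T) (fun a b h => h.2.2.2) (chain'_rtg_last P hP.2.2.1 hP.2.1 hw)
  · exact rtg_anc_rev (T := T) (fun a b h => h.2.2.2) (chain'_rtg_head P hP.2.2.1 hP.1 hw)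

lemma di2path_mod {x y : V} {P : List V} (hP : IsDPath (Di2 D T lvl k i) x y P)
    (hlen : 2 ≤ P.length) : ∀ w ∈ P, lvl w % k = i := by
  intro w hw
  have hrtg := chain'_rtg_head P hP.2.2.1 hP.1 hw
  rcases Relation.ReflTransGen.cases_tail hrtg with h | ⟨c, _, hc⟩
  · subst h
    match P, hP, hlen with
    | a :: b :: t, hP, _ =>
      obtain rfl : a = w := by simpa using hP.1
      exact ((List.isChain_cons_cons.mp hP.2.2.1).1).2.1
  · exact hc.2.2.1

lemma mem_of_pint {l : List V} {w : V} (h : w ∈ pint l) : w ∈ l := by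
  have := List.mem_of_mem_dropLast h
  exact List.mem_of_mem_tail this

end AuxPath


section Core
variable {D T : V → V → Prop} {r : V} {lvl : V → ℕ} {k i : ℕ}

lemma core_construction
    (hk : 1 ≤ k) (hT : IsMaximalSOT D T r lvl)
    {X1 X2 Y1 Y2 YA : V} {pA p2 p3 p4 : List V}
    (hA : IsDPath (Di2 D T lvl k i) X1 YA pA) (hA2 : 2 ≤ pA.length)
    (h2 : IsDPath (Di2 D T lvl k i) X2 Y1 p2) (h22 : 2 ≤ p2.length)
    (h3 : IsDPath (Di2 D T lvl k i) X2 Y2 p3) (h32 : 2 ≤ p3.length)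
    (h4 : IsDPath (Di2 D T lvl k i) X1 Y2 p4) (h42 : 2 ≤ p4.length)
    (hancA : Anc T YA Y1) (hneA : YA ≠ Y1)
    (hge : ∀ w, w ∈ p2 ∨ w ∈ p3 ∨ w ∈ p4 → Anc T Y1 w)
    (hX12 : X1 ≠ X2) (hX1Y1 : X1 ≠ Y1) (hX1Y2 : X1 ≠ Y2)
    (hX2Y1 : X2 ≠ Y1) (hX2Y2 : X2 ≠ Y2) (hY12 : Y1 ≠ Y2)
    (hpintspec : ∀ v, (v ∈ pint pA ∨ v ∈ pint p2 ∨ v ∈ pint p3 ∨ v ∈ pint p4) →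
      v ≠ X1 ∧ v ≠ X2 ∧ v ≠ Y1 ∧ v ≠ Y2)
    (dA2 : ∀ v ∈ pint pA, v ∉ pint p2) (dA3 : ∀ v ∈ pint pA, v ∉ pint p3)
    (dA4 : ∀ v ∈ pint pA, v ∉ pint p4) (d23 : ∀ v ∈ pint p2, v ∉ pint p3)
    (d24 : ∀ v ∈ pint p2, v ∉ pint p4) (d34 : ∀ v ∈ pint p3, v ∉ pint p4) :
    HasSubdivCk111 D k := by
  obtain ⟨hSOT, hlvl, hmax⟩ := hT
  obtain ⟨-, hTD, hroot, hpar', -⟩ := hSOT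
  have hpar : ∀ v : V, v ≠ r → ∃! u, T u v := fun v hv => hpar' v (Set.mem_univ v) hv
  have hstep : ∀ u v, T u v → lvl v = lvl u + 1 := fun u v h =>
    dwalk_unique hroot hpar (hlvl v) (dwalk_snoc (hlvl u) h)
  -- memberships of endpoints
  have hX1p4 : X1 ∈ p4 := List.mem_of_mem_head? h4.1
  have hX2p2 : X2 ∈ p2 := List.mem_of_mem_head? h2.1
  have hY2p3 : Y2 ∈ p3 := mem_of_getLast?' h3.2.1
  -- split pA at the first vertex which is an ancestor of Y1
  have hpAne : pA ≠ [] := by intro h; rw [h] at hA2; simp at hA2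
  obtain ⟨l1, vs, l2, hsplit, hvs, hl1⟩ := exists_split (fun v => Anc T v Y1) pA hpAne
    (by intro b hb
        have : b = YA := by
          rw [hA.2.1] at hb; exact (Option.mem_some_iff.mp hb).symm
        rw [this]; exact hancA)
  have hvsmem : vs ∈ pA := by rw [hsplit]; simp
  have hvsY1 : vs ≠ Y1 := by
    intro h
    rw [h] at hvsmem
    rcases mem_trichotomy pA hA.1 hA.2.1 hvsmem with h' | h' | h'
    · exact hX1Y1 h'.symm
    · exact hneA h'.symm
    · exact (hpintspec Y1 (Or.inl h')).2.2.1 rfl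
  -- l1 is nonempty, starting with X1
  have hl1ne : l1 ≠ [] := by
    intro h
    rw [h, List.nil_append] at hsplit
    have : pA.head? = some vs := by rw [hsplit]; rfl
    have hXvs : X1 = vs := by rw [hA.1] at this; exact Option.some_inj.mp this
    have h1 : Anc T X1 Y1 := hXvs ▸ hvs
    have h2' : Anc T Y1 X1 := hge X1 (Or.inr (Or.inr hX1p4))
    exact hX1Y1 (anc_antisymm hstep h1 h2')
  obtain ⟨a0, l1', rfl⟩ := List.exists_cons_of_ne_nil hl1ne
  have ha0 : X1 = a0 := by
    have : pA.head? = some a0 := by rw [hsplit]; rfl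
    rw [hA.1] at this; exact Option.some_inj.mp this
  subst ha0
  -- level arithmetic
  have hmodvs : lvl vs % k = i := di2path_mod hA hA2 vs hvsmem
  have hmodY1 : lvl Y1 % k = i := di2path_mod h2 h22 Y1 (mem_of_getLast?' h2.2.1)
  have hlt : lvl vs < lvl Y1 := anc_lvl_lt hstep hvs hvsY1
  have hkle : lvl vs + k ≤ lvl Y1 := mod_k_le hk hlt (hmodvs.trans hmodY1.symm)
  -- the tree path R from vs to Y1
  obtain ⟨R, hR1, hR2, hR3, hR4, hR5, hR6⟩ := anc_path hstep hvs
  have hRlen : k + 1 ≤ R.length := by omega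
  have hRne : R ≠ [] := by intro h; rw [h, List.length_nil] at hRlen; omega
  -- the long path p1
  set p1 : List V := (X1 :: l1') ++ R with hp1def
  have hp1head : p1.head? = some X1 := rfl
  have hp1last : p1.getLast? = some Y1 := by
    rw [hp1def, List.getLast?_append_of_ne_nil _ hRne]; exact hR2
  have hprefA : (X1 :: l1') <+: pA := ⟨vs :: l2, hsplit.symm⟩
  have hChainA : List.Chain' (Di2 D T lvl k i) pA := hA.2.2.1
  have hNodupA : pA.Nodup := hA.2.2.2
  have hChainl1 : List.Chain' D (X1 :: l1') :=
    (hChainA.prefix hprefA).imp (fun a b (h : Di2 D T lvl k i a b) => h.1)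
  have hlink : ∀ u ∈ (X1 :: l1').getLast?, ∀ z ∈ R.head?, D u z := by
    intro u hu z hz
    rw [hR1] at hz
    obtain rfl := Option.mem_some_iff.mp hz
    rw [hsplit] at hChainA
    have h5 := (List.isChain_append.mp hChainA).2.2
    exact (h5 u hu vs rfl).1
  have hChain1 : List.Chain' D p1 := by
    rw [hp1def, List.Chain', List.isChain_append]
    exact ⟨hChainl1, hR3.imp (fun a b h => (hTD a b h).1), hlink⟩
  have hNodup1 : p1.Nodup := by
    rw [hp1def, List.nodup_append]
    refine ⟨hNodupA.sublist hprefA.sublist, hR4, ?_⟩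
    intro u hu u' huR heq
    subst heq
    exact hl1 u hu ((hR6 u huR).2)
  have hp1path : IsDPath D X1 Y1 p1 := ⟨hp1head, hp1last, hChain1, hNodup1⟩
  have hp1len : k + 1 ≤ p1.length := by
    rw [hp1def, List.length_append]
    simp only [List.length_cons]
    omega
  -- interior of p1
  have hpint1 : pint p1 = l1' ++ R.dropLast := by
    rw [hp1def, pint, List.cons_append, List.tail_cons,
      List.dropLast_append_of_ne_nil hRne]
  have hsubpintA : ∀ u ∈ l1', u ∈ pint pA := by
    intro u hu
    rw [hsplit, pint, List.cons_append, List.tail_cons,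
      List.dropLast_append_of_ne_nil (List.cons_ne_nil vs l2)]
    exact List.mem_append_left _ hu
  have hRfact : ∀ w ∈ R.dropLast, Anc T w Y1 ∧ w ≠ Y1 := by
    intro w hw
    refine ⟨(hR6 w (List.mem_of_mem_dropLast hw)).2, ?_⟩
    intro h
    exact getLast_not_mem_dropLast hR4 hR2 (h ▸ hw)
  have hkill : ∀ w ∈ R.dropLast, ∀ u, (u ∈ p2 ∨ u ∈ p3 ∨ u ∈ p4) → w ≠ u := by
    intro w hw u hu heq
    obtain ⟨hwa, hwn⟩ := hRfact w hw
    subst heq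
    exact hwn (anc_antisymm hstep hwa (hge w hu))
  -- assemble
  refine ⟨X1, X2, Y1, Y2, p1, p2, p3, p4, hp1path,
    isdpath_mono (fun a b h => h.1) h2, isdpath_mono (fun a b h => h.1) h3,
    isdpath_mono (fun a b h => h.1) h4,
    hp1len, h22, h32, h42, hX12, hX1Y1, hX1Y2, hX2Y1, hX2Y2, hY12, ?_, ?_, ?_, ?_⟩
  · -- special vertices not interior
    intro v hv
    refine ⟨?_, ?_, ?_, ?_⟩
    · rw [hpint1]
      intro hmem
      rcases List.mem_append.mp hmem with hu | hw
      · obtain ⟨n1, n2, n3, n4⟩ := hpintspec v (Or.inl (hsubpintA v hu))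
        rcases hv with rfl | rfl | rfl | rfl
        · exact n1 rfl
        · exact n2 rfl
        · exact n3 rfl
        · exact n4 rfl
      · rcases hv with rfl | rfl | rfl | rfl
        · exact hkill v hw v (Or.inr (Or.inr hX1p4)) rfl
        · exact hkill v hw v (Or.inl hX2p2) rfl
        · exact (hRfact v hw).2 rfl
        · exact hkill v hw v (Or.inr (Or.inl hY2p3)) rfl
    · intro hmem
      obtain ⟨n1, n2, n3, n4⟩ := hpintspec v (Or.inr (Or.inl hmem))
      rcases hv with rfl | rfl | rfl | rfl
      · exact n1 rfl
      · exact n2 rfl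
      · exact n3 rfl
      · exact n4 rfl
    · intro hmem
      obtain ⟨n1, n2, n3, n4⟩ := hpintspec v (Or.inr (Or.inr (Or.inl hmem)))
      rcases hv with rfl | rfl | rfl | rfl
      · exact n1 rfl
      · exact n2 rfl
      · exact n3 rfl
      · exact n4 rfl
    · intro hmem
      obtain ⟨n1, n2, n3, n4⟩ := hpintspec v (Or.inr (Or.inr (Or.inr hmem)))
      rcases hv with rfl | rfl | rfl | rfl
      · exact n1 rfl
      · exact n2 rfl
      · exact n3 rfl
      · exact n4 rfl
  · -- pint p1 disjoint from others
    intro v hv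
    rw [hpint1] at hv
    rcases List.mem_append.mp hv with hu | hw
    · have h := hsubpintA v hu
      exact ⟨dA2 v h, dA3 v h, dA4 v h⟩
    · exact ⟨fun hc => hkill v hw v (Or.inl (mem_of_pint hc)) rfl,
        fun hc => hkill v hw v (Or.inr (Or.inl (mem_of_pint hc))) rfl,
        fun hc => hkill v hw v (Or.inr (Or.inr (mem_of_pint hc))) rfl⟩
  · intro v hv
    exact ⟨d23 v hv, d24 v hv⟩
  · intro v hv
    exact d34 v hv

end Core

/-- a cycle with at least 6 blocks in some `D_i^2` forces a subdivision of
C(k,1,1,1). -/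
theorem blockCycle_Di2_gives_subdivision {V : Type u} (D T : V → V → Prop) (r : V)
    (lvl : V → ℕ) (k : ℕ) (hk : 1 ≤ k) (hT : IsMaximalSOT D T r lvl)
    (h : ∃ i < k, ∃ m, 3 ≤ m ∧ HasBlockCycle (Di2 D T lvl k i) m) :
    HasSubdivCk111 D k := by
  obtain ⟨i, hik, m, hm3, xx, yy, P, Q, hP, hQ, hBD⟩ := h
  obtain ⟨hx, hy, hxy, hspec, hPP, hQQ, hPQ⟩ := hBD
  obtain ⟨⟨-, hTD, hroot, hpar', -⟩, hlvl, -⟩ := id hT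
  have hpar : ∀ v : V, v ≠ r → ∃! u, T u v := fun v hv => hpar' v (Set.mem_univ v) hv
  have hstep : ∀ u v, T u v → lvl v = lvl u + 1 := fun u v h' =>
    dwalk_unique hroot hpar (hlvl v) (dwalk_snoc (hlvl u) h')
  have h0m : 0 < m := by omega
  obtain ⟨t, htmem, htmax'⟩ := Finset.exists_max_image (Finset.range m)
    (fun j => lvl (yy j)) ⟨0, Finset.mem_range.mpr h0m⟩
  have htm : t < m := Finset.mem_range.mp htmem
  have htmax : ∀ j, j < m → lvl (yy j) ≤ lvl (yy t) :=
    fun j hj => htmax' j (Finset.mem_range.mpr hj)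
  set a := (t + 1) % m with hadef
  set b := (t + (m - 1)) % m with hbdef
  have ham : a < m := Nat.mod_lt _ h0m
  have hbm : b < m := Nat.mod_lt _ h0m
  have hba1 : (b + 1) % m = t := by
    rw [hbdef, Nat.mod_add_mod]
    have he : t + (m - 1) + 1 = t + m := by omega
    rw [he, Nat.add_mod_right]
    exact Nat.mod_eq_of_lt htm
  have haval : (t + 1 < m ∧ a = t + 1) ∨ (t + 1 = m ∧ a = 0) := by
    rcases Nat.lt_or_ge (t + 1) m with h' | h'
    · exact Or.inl ⟨h', by rw [hadef, Nat.mod_eq_of_lt h']⟩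
    · have he : t + 1 = m := by omega
      exact Or.inr ⟨he, by rw [hadef, he, Nat.mod_self]⟩
  have hbval : (t = 0 ∧ b = m - 1) ∨ (1 ≤ t ∧ b = t - 1) := by
    rcases Nat.eq_zero_or_pos t with h' | h'
    · left
      refine ⟨h', ?_⟩
      rw [hbdef, h', Nat.zero_add, Nat.mod_eq_of_lt (by omega)]
    · right
      refine ⟨h', ?_⟩
      have he : t + (m - 1) = (t - 1) + m := by omega
      rw [hbdef, he, Nat.add_mod_right]
      exact Nat.mod_eq_of_lt (by omega)
  have hat : a ≠ t := by rcases haval with ⟨h1, h2⟩ | ⟨h1, h2⟩ <;> omega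
  have hbt : b ≠ t := by rcases hbval with ⟨h1, h2⟩ | ⟨h1, h2⟩ <;> omega
  have hab : a ≠ b := by
    rcases haval with ⟨h1, h2⟩ | ⟨h1, h2⟩ <;> rcases hbval with ⟨h3, h4⟩ | ⟨h3, h4⟩ <;> omega
  obtain ⟨hPt, hPt2⟩ := hP t htm
  obtain ⟨hPa, hPa2⟩ := hP a ham
  have hQt : IsDPath (Di2 D T lvl k i) (xx a) (yy t) (Q t) := by
    have := (hQ t htm).1; rwa [← hadef] at this
  have hQt2 : 2 ≤ (Q t).length := (hQ t htm).2
  have hQb : IsDPath (Di2 D T lvl k i) (xx t) (yy b) (Q b) := by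
    have := (hQ b hbm).1; rwa [hba1] at this
  have hQb2 : 2 ≤ (Q b).length := (hQ b hbm).2
  have hancPt := di2path_anc hPt
  have hancPa := di2path_anc hPa
  have hancQt := di2path_anc hQt
  have hancQb := di2path_anc hQb
  have hxtQb : xx t ∈ Q b := List.mem_of_mem_head? hQb.1
  have hxaQt : xx a ∈ Q t := List.mem_of_mem_head? hQt.1
  have hxtPt : xx t ∈ P t := List.mem_of_mem_head? hPt.1
  have hxaPa : xx a ∈ P a := List.mem_of_mem_head? hPa.1
  have hytxt : Anc T (yy t) (xx t) := (hancPt _ hxtPt).1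
  have hybxt : Anc T (yy b) (xx t) := (hancQb _ hxtQb).1
  have hytxa : Anc T (yy t) (xx a) := (hancQt _ hxaQt).1
  have hyaxa : Anc T (yy a) (xx a) := (hancPa _ hxaPa).1
  have hybyt : Anc T (yy b) (yy t) := by
    rcases anc_total hroot hpar hstep hybxt hytxt with h' | h'
    · exact h'
    · have h1 := anc_lvl_le hstep h'
      have h2 := htmax b hbm
      have hne : yy t ≠ yy b := hy t htm b hbm (Ne.symm hbt)
      have := anc_lvl_lt hstep h' hne
      omega
  have hyayt : Anc T (yy a) (yy t) := by
    rcases anc_total hroot hpar hstep hyaxa hytxa with h' | h'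
    · exact h'
    · have h1 := anc_lvl_le hstep h'
      have h2 := htmax a ham
      have hne : yy t ≠ yy a := hy t htm a ham (Ne.symm hat)
      have := anc_lvl_lt hstep h' hne
      omega
  rcases anc_total hroot hpar hstep hyayt hybyt with hcase | hcase
  · -- Case A : yy a is an ancestor of yy b
    refine core_construction hk hT hPa hPa2 hQb hQb2 hPt hPt2 hQt hQt2 hcase
      (hy a ham b hbm hab) ?_ (hx a ham t htm hat) (hxy a ham b hbm) (hxy a ham t htm)
      (hxy t htm b hbm) (hxy t htm t htm) (hy b hbm t htm hbt) ?_
      (fun v hv => hPQ a ham b hbm v hv)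
      (fun v hv => hPP a ham t htm hat v hv)
      (fun v hv => hPQ a ham t htm v hv)
      (fun v hv hc => hPQ t htm b hbm v hc hv)
      (fun v hv => hQQ b hbm t htm hbt v hv)
      (fun v hv => hPQ t htm t htm v hv)
    · intro w hw
      rcases hw with hw | hw | hw
      · exact (hancQb w hw).1
      · exact Relation.ReflTransGen.trans hybyt (hancPt w hw).1
      · exact Relation.ReflTransGen.trans hybyt (hancQt w hw).1
    · intro v hv
      rcases hv with h' | h' | h' | h'
      · exact ⟨(hspec a ham a ham v (Or.inl h')).1, (hspec a ham t htm v (Or.inl h')).1,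
          (hspec a ham b hbm v (Or.inl h')).2, (hspec a ham t htm v (Or.inl h')).2⟩
      · exact ⟨(hspec b hbm a ham v (Or.inr h')).1, (hspec b hbm t htm v (Or.inr h')).1,
          (hspec b hbm b hbm v (Or.inr h')).2, (hspec b hbm t htm v (Or.inr h')).2⟩
      · exact ⟨(hspec t htm a ham v (Or.inl h')).1, (hspec t htm t htm v (Or.inl h')).1,
          (hspec t htm b hbm v (Or.inl h')).2, (hspec t htm t htm v (Or.inl h')).2⟩
      · exact ⟨(hspec t htm a ham v (Or.inr h')).1, (hspec t htm t htm v (Or.inr h')).1,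
          (hspec t htm b hbm v (Or.inr h')).2, (hspec t htm t htm v (Or.inr h')).2⟩
  · -- Case B : yy b is an ancestor of yy a
    refine core_construction hk hT hQb hQb2 hPa hPa2 hQt hQt2 hPt hPt2 hcase
      (hy b hbm a ham (Ne.symm hab)) ?_ (hx t htm a ham (Ne.symm hat)) (hxy t htm a ham)
      (hxy t htm t htm) (hxy a ham a ham) (hxy a ham t htm) (hy a ham t htm hat) ?_
      (fun v hv hc => hPQ a ham b hbm v hc hv)
      (fun v hv => hQQ b hbm t htm hbt v hv)
      (fun v hv hc => hPQ t htm b hbm v hc hv)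
      (fun v hv => hPQ a ham t htm v hv)
      (fun v hv => hPP a ham t htm hat v hv)
      (fun v hv hc => hPQ t htm t htm v hc hv)
    · intro w hw
      rcases hw with hw | hw | hw
      · exact (hancPa w hw).1
      · exact Relation.ReflTransGen.trans hyayt (hancQt w hw).1
      · exact Relation.ReflTransGen.trans hyayt (hancPt w hw).1
    · intro v hv
      rcases hv with h' | h' | h' | h'
      · exact ⟨(hspec b hbm t htm v (Or.inr h')).1, (hspec b hbm a ham v (Or.inr h')).1,
          (hspec b hbm a ham v (Or.inr h')).2, (hspec b hbm t htm v (Or.inr h')).2⟩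
      · exact ⟨(hspec a ham t htm v (Or.inl h')).1, (hspec a ham a ham v (Or.inl h')).1,
          (hspec a ham a ham v (Or.inl h')).2, (hspec a ham t htm v (Or.inl h')).2⟩
      · exact ⟨(hspec t htm t htm v (Or.inr h')).1, (hspec t htm a ham v (Or.inr h')).1,
          (hspec t htm a ham v (Or.inr h')).2, (hspec t htm t htm v (Or.inr h')).2⟩
      · exact ⟨(hspec t htm t htm v (Or.inl h')).1, (hspec t htm a ham v (Or.inl h')).1,
          (hspec t htm a ham v (Or.inl h')).2, (hspec t htm t htm v (Or.inl h')).2⟩
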